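/- arXiv:2011.04320 — 4 statements merged into one kernel-verified Lean document; each statement's English description precedes it below -/
import Mathlib

section
/- For any entire function F of the form F(z) = P(z)·exp(S z² + D z), where P is a nonzero polynomial of degree n and S, D are complex constants, the derivative F′ has the same form Q(z)·exp(S z² + D z) where Q is a polynomial whose degree is n+1 if S ≠ 0; n if S = 0 and D ≠ 0; and n−1 if S = D = 0 and n ≥ 1. -/
/-- For `F(z) = P(z)·exp(S z² + D z)` with `P` a nonzero polynomial of degree `n`, the
derivative `F'` has the form `Q(z)·exp(S z² + D z)` with `Q` a polynomial of degree `n+1`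
if `S ≠ 0`, degree `n` if `S = 0` and `D ≠ 0`, and degree `n−1` if `S = D = 0` and `n ≥ 1`. -/
theorem stmt_4 (P : Polynomial ℂ) (hP : P ≠ 0) (S D : ℂ) (n : ℕ) (hn : P.natDegree = n) :
    ∃ Q : Polynomial ℂ,
      (∀ z : ℂ, deriv (fun w : ℂ => P.eval w * Complex.exp (S * w ^ 2 + D * w)) z
          = Q.eval z * Complex.exp (S * z ^ 2 + D * z)) ∧
      (S ≠ 0 → Q.natDegree = n + 1) ∧
      (S = 0 → D ≠ 0 → Q.natDegree = n) ∧
      (S = 0 → D = 0 → 1 ≤ n → Q.natDegree = n - 1) := by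
  refine ⟨P.derivative + (Polynomial.C (2 * S) * Polynomial.X + Polynomial.C D) * P,
    ?_, ?_, ?_, ?_⟩
  · intro z
    have h1 : HasDerivAt (fun w : ℂ => P.eval w) (P.derivative.eval z) z :=
      P.hasDerivAt z
    have h2 : HasDerivAt (fun w : ℂ => S * w ^ 2 + D * w) (2 * S * z + D) z := by
      have : HasDerivAt (fun w : ℂ => S * w ^ 2 + D * w)
          (S * (2 * z ^ 1) + D * 1) z := by
        exact (((hasDerivAt_pow 2 z).const_mul S).add ((hasDerivAt_id z).const_mul D))
      simpa [mul_comm, mul_assoc, mul_left_comm] using this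
    have h3 : HasDerivAt (fun w : ℂ => Complex.exp (S * w ^ 2 + D * w))
        (Complex.exp (S * z ^ 2 + D * z) * (2 * S * z + D)) z := h2.cexp
    have := (h1.mul h3).deriv
    rw [show deriv (fun w : ℂ => P.eval w * Complex.exp (S * w ^ 2 + D * w)) z = _ from this]
    simp only [Polynomial.eval_add, Polynomial.eval_mul, Polynomial.eval_C,
      Polynomial.eval_X]
    ring
  · intro hS
    have hdeg : ((Polynomial.C (2 * S) * Polynomial.X + Polynomial.C D) * P).degree
        = 1 + P.degree := by
      rw [Polynomial.degree_mul, Polynomial.degree_linear (by simpa using hS)]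
    have hlt : P.derivative.degree
        < ((Polynomial.C (2 * S) * Polynomial.X + Polynomial.C D) * P).degree := by
      rw [hdeg]
      calc P.derivative.degree < P.degree := Polynomial.degree_derivative_lt hP
        _ ≤ 1 + P.degree := by
          rw [Polynomial.degree_eq_natDegree hP]
          exact_mod_cast le_add_self
    have hQ : (P.derivative
        + (Polynomial.C (2 * S) * Polynomial.X + Polynomial.C D) * P).degree
        = 1 + P.degree := by
      rw [add_comm, Polynomial.degree_add_eq_left_of_degree_lt hlt, hdeg]
    refine Polynomial.natDegree_eq_of_degree_eq_some ?_
    rw [hQ, Polynomial.degree_eq_natDegree hP, hn]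
    push_cast
    ring
  · intro hS hD
    subst hS
    have hdeg : ((Polynomial.C (2 * (0:ℂ)) * Polynomial.X + Polynomial.C D) * P).degree
        = P.degree := by
      simp [Polynomial.degree_mul, Polynomial.degree_C hD]
    have hlt : P.derivative.degree
        < ((Polynomial.C (2 * (0:ℂ)) * Polynomial.X + Polynomial.C D) * P).degree := by
      rw [hdeg]; exact Polynomial.degree_derivative_lt hP
    have hQ : (P.derivative
        + (Polynomial.C (2 * (0:ℂ)) * Polynomial.X + Polynomial.C D) * P).degree
        = P.degree := by
      rw [add_comm, Polynomial.degree_add_eq_left_of_degree_lt hlt, hdeg]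
    exact Polynomial.natDegree_eq_of_degree_eq_some
      (by rw [hQ, Polynomial.degree_eq_natDegree hP, hn])
  · intro hS hD hn1
    subst hS; subst hD
    rw [show (Polynomial.C (2 * (0:ℂ)) * Polynomial.X + Polynomial.C 0) * P = 0 by simp,
      add_zero]
    refine Polynomial.natDegree_eq_of_degree_eq_some ?_
    rw [Polynomial.degree_derivative_eq P (by omega), hn]
end

section
/- For all m ∈ ℕ and complex constants a ≠ 0 and b, the m-th derivative of z ↦ exp(−(1/2)a z² + b z) evaluated at z = 0 equals a^{m/2} He_m(b/√a), where He_m is the m-th probabilists' Hermite polynomial and √a is any fixed square root of a. -/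
/-- The `m`-th probabilists' Hermite polynomial, as an explicit sum:
`He_m(x) = Σ_{p=0}^{⌊m/2⌋} (m!(−1)^p/(2^p p! (m−2p)!)) x^{m−2p}`. -/
noncomputable def hermiteHe (m : ℕ) (x : ℂ) : ℂ :=
  ∑ p ∈ Finset.range (m / 2 + 1),
    ((Nat.factorial m : ℂ) * (-1) ^ p /
        ((2 : ℂ) ^ p * (Nat.factorial p : ℂ) * (Nat.factorial (m - 2 * p) : ℂ))) *
      x ^ (m - 2 * p)

lemma nat_fact_aux (p : ℕ) : (2 * p).factorial = 2 ^ p * p.factorial * Nat.doubleFactorial (2*p-1) := by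
  cases p with
  | zero => rfl
  | succ q =>
    have h : (2 * (q + 1)) = (2 * q + 1) + 1 := by ring
    rw [h, Nat.factorial_eq_mul_doubleFactorial, ← h, Nat.doubleFactorial_two_mul]
    have h2 : 2 * (q + 1) - 1 = 2 * q + 1 := by omega
    rw [h2]

lemma hermiteHe_eq_aeval (m : ℕ) (x : ℂ) :
    hermiteHe m x = Polynomial.aeval x (Polynomial.hermite m) := by
  rw [Polynomial.aeval_def, Polynomial.eval₂_eq_sum_range]
  rw [Polynomial.natDegree_hermite]
  have hsub : (Finset.range (m / 2 + 1)).image (fun p => m - 2 * p) ⊆ Finset.range (m + 1) := by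
    intro k hk
    simp only [Finset.mem_image, Finset.mem_range] at hk ⊢
    omega
  have hzero : ∀ k ∈ Finset.range (m + 1),
      k ∉ (Finset.range (m / 2 + 1)).image (fun p => m - 2 * p) →
      (algebraMap ℤ ℂ) ((Polynomial.hermite m).coeff k) * x ^ k = 0 := by
    intro k hk hknot
    simp only [Finset.mem_range] at hk
    simp only [Finset.mem_image, Finset.mem_range, not_exists, not_and] at hknot
    have hodd : ¬ Even (m + k) := by
      intro he
      have h2 : Even (m - k) := by
        rcases he with ⟨t, ht⟩
        exact ⟨t - k, by omega⟩
      rcases h2 with ⟨t, ht⟩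
      exact hknot t (by omega) (by omega)
    rw [Polynomial.coeff_hermite, if_neg hodd]
    simp
  have hinj : ∀ p ∈ Finset.range (m / 2 + 1), ∀ q ∈ Finset.range (m / 2 + 1),
      m - 2 * p = m - 2 * q → p = q := by
    intro p hp q hq h
    simp only [Finset.mem_range] at hp hq
    omega
  rw [← Finset.sum_subset hsub hzero, Finset.sum_image hinj]
  unfold hermiteHe
  apply Finset.sum_congr rfl
  intro p hp
  simp only [Finset.mem_range] at hp
  have h2p : 2 * p ≤ m := by omega
  have hcoeff : (Polynomial.hermite m).coeff (m - 2 * p) =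
      (-1) ^ p * Nat.doubleFactorial (2*p-1) * Nat.choose m (m - 2 * p) := by
    have := Polynomial.coeff_hermite_explicit p (m - 2 * p)
    rwa [show 2 * p + (m - 2 * p) = m by omega] at this
  rw [Nat.choose_symm h2p] at hcoeff
  rw [hcoeff]
  congr 1
  push_cast
  have hfac : (m.choose (2 * p) : ℂ) * (2 * p).factorial * (m - 2 * p).factorial
      = m.factorial := by
    exact_mod_cast congrArg (Nat.cast : ℕ → ℂ)
      (Nat.choose_mul_factorial_mul_factorial h2p)
  have hdf : (Nat.doubleFactorial (2*p-1) : ℂ) * (2 ^ p * p.factorial) = (2 * p).factorial := by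
    exact_mod_cast congrArg (Nat.cast : ℕ → ℂ) (by rw [nat_fact_aux p]; ring)
  have h2 : (2 : ℂ) ^ p ≠ 0 := pow_ne_zero _ two_ne_zero
  have hp1 : (p.factorial : ℂ) ≠ 0 := Nat.cast_ne_zero.2 (Nat.factorial_ne_zero p)
  have hp2 : ((m - 2 * p).factorial : ℂ) ≠ 0 := Nat.cast_ne_zero.2 (Nat.factorial_ne_zero _)
  field_simp
  rw [← hfac, ← hdf]
  ring

/-- For all `m ∈ ℕ` and complex constants `a ≠ 0` and `b`, the `m`-th derivative of
`z ↦ exp(−(1/2) a z² + b z)` at `z = 0` equals `a^{m/2} He_m(b/√a) = (√a)^m He_m(b/√a)`,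
where `√a` is any fixed square root `s` of `a`. -/
theorem stmt_7 (m : ℕ) (a b : ℂ) (ha : a ≠ 0) (s : ℂ) (hs : s ^ 2 = a) :
    iteratedDeriv m (fun z : ℂ => Complex.exp (-(1 / 2) * a * z ^ 2 + b * z)) 0 =
      s ^ m * hermiteHe m (b / s) := by
  have hs0 : s ≠ 0 := by
    intro h; apply ha; rw [← hs, h]; ring
  set f : ℂ → ℂ := fun z => Complex.exp (-(1 / 2) * a * z ^ 2 + b * z) with hf
  have hexp : ∀ z : ℂ, HasDerivAt f ((-a * z + b) * f z) z := by
    intro z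
    have h1 : HasDerivAt (fun z : ℂ => -(1 / 2) * a * z ^ 2 + b * z) (-a * z + b) z := by
      have := (((hasDerivAt_pow 2 z).const_mul (-(1 / 2) * a)).add
        ((hasDerivAt_id z).const_mul b))
      refine this.congr_deriv ?_
      simp; ring
    have h := h1.cexp
    refine h.congr_deriv ?_
    ring
  have key : ∀ n : ℕ, iteratedDeriv n f =
      fun z => s ^ n * Polynomial.aeval ((b - a * z) / s) (Polynomial.hermite n) * f z := by
    intro n
    induction n with
    | zero =>
      funext z
      simp [Polynomial.hermite_zero]
    | succ n ih =>
      funext z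
      rw [iteratedDeriv_succ, ih]
      have haff : HasDerivAt (fun z : ℂ => (b - a * z) / s) (-a / s) z := by
        have := ((hasDerivAt_id z).const_mul a).const_sub b
        have h2 := this.div_const s
        refine h2.congr_deriv ?_
        ring
      have hpoly : HasDerivAt (fun z : ℂ =>
          Polynomial.aeval ((b - a * z) / s) (Polynomial.hermite n))
          (Polynomial.aeval ((b - a * z) / s)
            (Polynomial.derivative (Polynomial.hermite n)) * (-a / s)) z := by
        have hq := (Polynomial.hasDerivAt ((Polynomial.hermite n).map (algebraMap ℤ ℂ))
          ((b - a * z) / s)).comp z haff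
        simp only [Polynomial.eval_map, ← Polynomial.aeval_def, Polynomial.derivative_map]
          at hq
        exact hq
        try simp [Polynomial.aeval_def, Polynomial.eval_map]
      have hprod : HasDerivAt (fun z => s ^ n *
          Polynomial.aeval ((b - a * z) / s) (Polynomial.hermite n) * f z)
          (s ^ n * (Polynomial.aeval ((b - a * z) / s)
            (Polynomial.derivative (Polynomial.hermite n)) * (-a / s)) * f z +
           s ^ n * Polynomial.aeval ((b - a * z) / s) (Polynomial.hermite n) *
             ((-a * z + b) * f z)) z := by
        exact ((hpoly.const_mul (s ^ n)).mul (hexp z))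
      rw [hprod.deriv]
      rw [Polynomial.hermite_succ]
      simp only [map_sub, map_mul, Polynomial.aeval_X]
      have has : a / s = s := by
        field_simp [← hs]; exact hs.symm
      have : -a / s = -s := by rw [neg_div, has]
      rw [this]
      field_simp
      ring
  rw [key m]
  simp [hf, hermiteHe_eq_aeval]
end

section
/- Let ρ be a single-mode quantum state with Fock-basis matrix elements ρ_{kk} = ⟨k|ρ|k⟩, and let α ∈ ℂ. For n ∈ ℕ*, define ω_ρ(α,n) = Σ_{k=0}^{n−1} ⟨2k+1| D†(α) ρ D(α) |2k+1⟩, where D(α) is the displacement operator. Then the Wigner function W_ρ(α) = (2/π) Tr[D(α) Π_P D†(α) ρ], with Π_P = Σ_{k≥0} (−1)^k |k⟩⟨k| the parity operator, satisfies W_ρ(α) ≤ (2/π)(1 − 2 ω_ρ(α,n)). In particular, if ω_ρ(α,n) > 1/2 for some n, then W_ρ(α) < 0. -/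
/-- Wigner-negativity witness. Let `σ k = ⟨k|D†(α) ρ D(α)|k⟩` be the Fock-basis diagonal
entries of the displaced state (so `σ k ≥ 0` and `Σ σ k = 1`). The Wigner function at `α`
is `W_ρ(α) = (2/π) Tr[D(α) Π_P D†(α) ρ] = (2/π) Σ_k (−1)^k σ k`, and with
`ω_ρ(α,n) = Σ_{k=0}^{n−1} σ (2k+1)` one has `W_ρ(α) ≤ (2/π)(1 − 2 ω_ρ(α,n))`.
In particular, if `ω_ρ(α,n) > 1/2` for some `n ≥ 1`, then `W_ρ(α) < 0`. -/
theorem stmt_8 (σ : ℕ → ℝ) (hpos : ∀ k, 0 ≤ σ k) (hsum : HasSum σ 1)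
    (n : ℕ) (hn : 1 ≤ n) :
    (2 / Real.pi) * (∑' k : ℕ, (-1 : ℝ) ^ k * σ k) ≤
        (2 / Real.pi) * (1 - 2 * ∑ k ∈ Finset.range n, σ (2 * k + 1)) ∧
      ((1 / 2 : ℝ) < ∑ k ∈ Finset.range n, σ (2 * k + 1) →
        (2 / Real.pi) * (∑' k : ℕ, (-1 : ℝ) ^ k * σ k) < 0) := by
  set g : ℕ → ℝ := fun k => if Odd k then σ k else 0 with hg
  have hgs : Summable g := by
    apply Summable.of_nonneg_of_le (fun k => ?_) (fun k => ?_) hsum.summable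
    · simp only [hg]; split <;> [exact hpos k; exact le_refl _]
    · simp only [hg]; split <;> [exact le_refl _; exact hpos k]
  have hf : HasSum (fun k => (-1 : ℝ) ^ k * σ k) (1 - 2 * ∑' k, g k) := by
    have h2 : HasSum (fun k => 2 * g k) (2 * ∑' k, g k) := hgs.hasSum.mul_left 2
    have := hsum.sub h2
    have heq : (fun k => (-1 : ℝ) ^ k * σ k) = fun k => σ k - 2 * g k := by
      funext k
      rcases Nat.even_or_odd k with h | h
      · simp [hg, h, Nat.not_odd_iff_even.mpr h, h.neg_one_pow]
      · simp [hg, h, h.neg_one_pow]; ring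
    rw [heq]; exact this
  have hST : ∑ k ∈ Finset.range n, σ (2 * k + 1) ≤ ∑' k, g k := by
    have hinj : Set.InjOn (fun k => 2 * k + 1) (Finset.range n) := fun a _ b _ h => by simp only at h; omega
    calc ∑ k ∈ Finset.range n, σ (2 * k + 1)
        = ∑ j ∈ (Finset.range n).image (fun k => 2 * k + 1), g j := by
          rw [Finset.sum_image hinj]
          apply Finset.sum_congr rfl
          intro k _
          have hk : Odd (2 * k + 1) := ⟨k, by ring⟩
          simp [hg, hk]
      _ ≤ ∑' k, g k := Summable.sum_le_tsum _ (fun i _ => by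
          simp only [hg]; split <;> [exact hpos i; exact le_refl _]) hgs
  have hpi : 0 < 2 / Real.pi := by positivity
  constructor
  · apply mul_le_mul_of_nonneg_left _ hpi.le
    rw [hf.tsum_eq]
    linarith
  · intro h
    have : (∑' k : ℕ, (-1 : ℝ) ^ k * σ k) < 0 := by rw [hf.tsum_eq]; linarith
    exact mul_neg_of_pos_of_neg hpi this
end

section
/- A pure state |ψ⟩ has finite stellar rank n if and only if its stellar function F*_ψ(z) = e^{|z|²/2}⟨ψ*|z⟩ = Σ_{k≥0} (ψ_k/√(k!)) z^k has exactly n zeros counted with multiplicity; for a core state |C⟩ = Σ_{m=0}^{n} c_m |m⟩ with c_n ≠ 0, the stellar function is the polynomial Σ_{m=0}^{n} (c_m/√(m!)) z^m of degree n, hence the stellar rank of a core state equals its maximal Fock-support index n. -/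
/-- The stellar function of a state with Fock coefficients `ψ : ℕ → ℂ`:
`F*_ψ(z) = Σ_k (ψ_k/√(k!)) z^k`. -/
noncomputable def stellarFunction (ψ : ℕ → ℂ) (z : ℂ) : ℂ :=
  ∑' k : ℕ, (ψ k / (Real.sqrt (Nat.factorial k) : ℂ)) * z ^ k

/-- For a core state `|C⟩ = Σ_{m=0}^n c_m |m⟩` with `c_n ≠ 0`, the stellar function is the
polynomial `Σ_{m=0}^n (c_m/√(m!)) z^m` of degree `n`; hence it has exactly `n` zeros counted
with multiplicity, i.e. the stellar rank of a core state equals its maximal Fock-support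
index `n`. -/
theorem stmt_12 (n : ℕ) (c : ℕ → ℂ) (hsupp : ∀ m, n < m → c m = 0) (hc : c n ≠ 0) :
    ∃ P : Polynomial ℂ,
      (∀ m : ℕ, P.coeff m = c m / (Real.sqrt (Nat.factorial m) : ℂ)) ∧
      P.natDegree = n ∧
      (∀ z : ℂ, stellarFunction c z = P.eval z) ∧
      P.roots.card = n := by
  set f : ℕ → ℂ := fun m => c m / (Real.sqrt (Nat.factorial m) : ℂ) with hf
  have hfz : ∀ m, n < m → f m = 0 := by
    intro m hm; simp [hf, hsupp m hm]
  have hfn : f n ≠ 0 := by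
    simp only [hf, div_ne_zero_iff]
    refine ⟨hc, ?_⟩
    exact_mod_cast Real.sqrt_ne_zero'.2 (by positivity : (0:ℝ) < Nat.factorial n)
  set P : Polynomial ℂ := ∑ m ∈ Finset.range (n+1), Polynomial.C (f m) * Polynomial.X ^ m with hP
  have hcoeff : ∀ m : ℕ, P.coeff m = f m := by
    intro m
    rw [Polynomial.finset_sum_coeff]
    simp only [Polynomial.coeff_C_mul, Polynomial.coeff_X_pow]
    by_cases hm : m ≤ n
    · rw [Finset.sum_eq_single m]
      · simp
      · intro b _ hb; simp [Ne.symm hb]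
      · intro h; exact absurd (Finset.mem_range.2 (Nat.lt_succ_of_le hm)) h
    · push_neg at hm
      rw [hfz m hm]
      apply Finset.sum_eq_zero
      intro b hb
      have : b ≠ m := by
        rintro rfl; exact absurd (Finset.mem_range.1 hb) (by omega)
      simp [Ne.symm this]
  have hdeg : P.natDegree = n := by
    refine le_antisymm (Polynomial.natDegree_le_iff_coeff_eq_zero.2 fun m hm => ?_)
      (Polynomial.le_natDegree_of_ne_zero (by rw [hcoeff]; exact hfn))
    rw [hcoeff]; exact hfz m hm
  refine ⟨P, hcoeff, hdeg, ?_, ?_⟩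
  · intro z
    have hsum : stellarFunction c z = ∑ k ∈ Finset.range (n+1), f k * z ^ k := by
      apply tsum_eq_sum
      intro k hk
      have : n < k := by
        by_contra h
        exact hk (Finset.mem_range.2 (by omega))
      simp [hsupp k this]
    rw [hsum, hP, Polynomial.eval_finset_sum]
    simp
  · rw [← hdeg]
    exact (Polynomial.splits_iff_card_roots).1 (IsAlgClosed.splits P)
end
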